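/- arXiv:2409.08748 — 2 statements merged into one kernel-verified Lean document; each statement's English description precedes it below -/
import Mathlib

section
/- Let ε, ε' ≥ 0, a = ‖ξ‖² + ε² > 0, a' = ‖ξ'‖² + ε'² > 0, and c ∈ ℝ with c² < a·a' (c plays the role of {ξ,ξ'}). Then for any d, d', q ∈ ℝ: ∫_ℝ (1/(π√(a·a' − c²)))·exp((2c(d−s)(d'−(q−s)) − a'(d−s)² − a(d'−(q−s))²)/(a·a' − c²)) ds = (1/(√π·√(2c + a + a')))·exp(−(d + d' − q)²/(2c + a + a')). -/
open MeasureTheory Real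

/-- Convolution identity for the two-variable Gaussian product (scalar content of
Lemma 3.5): with `a = ‖ξ‖² + ε² > 0`, `a' = ‖ξ'‖² + ε'² > 0` and `c² < a·a'`,
integrating over `s` yields a single Gaussian in `d + d' − q` with variance
parameter `2c + a + a'`. -/
theorem gaussian_convolution_identity (a a' c d d' q : ℝ)
    (ha : 0 < a) (ha' : 0 < a') (hc : c ^ 2 < a * a') :
    ∫ s : ℝ, (1 / (π * Real.sqrt (a * a' - c ^ 2))) *
      Real.exp ((2 * c * (d - s) * (d' - (q - s)) - a' * (d - s) ^ 2
        - a * (d' - (q - s)) ^ 2) / (a * a' - c ^ 2))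
    = (1 / (Real.sqrt π * Real.sqrt (2 * c + a + a'))) *
        Real.exp (-((d + d' - q) ^ 2) / (2 * c + a + a')) := by
  set D : ℝ := a * a' - c ^ 2 with hDdef
  set K : ℝ := 2 * c + a + a' with hKdef
  have hD : 0 < D := by simp [hDdef]; linarith
  have hK : 0 < K := by nlinarith [sq_nonneg (a - a'), sq_nonneg (a + a' + 2 * c)]
  set w : ℝ := d + d' - q with hwdef
  set m : ℝ := d - (c + a) * w / K with hmdef
  have hpi : (0:ℝ) < π := Real.pi_pos
  have key : ∀ s : ℝ,
      (1 / (π * Real.sqrt D)) *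
        Real.exp ((2 * c * (d - s) * (d' - (q - s)) - a' * (d - s) ^ 2
          - a * (d' - (q - s)) ^ 2) / D)
      = (1 / (π * Real.sqrt D)) * Real.exp (-(w ^ 2) / K) *
          Real.exp (-(K / D) * (s - m) ^ 2) := by
    intro s
    have he : Real.exp (-(w ^ 2) / K) * Real.exp (-(K / D) * (s - m) ^ 2)
        = Real.exp ((2 * c * (d - s) * (d' - (q - s)) - a' * (d - s) ^ 2
          - a * (d' - (q - s)) ^ 2) / D) := by
      rw [← Real.exp_add]
      congr 1
      rw [hmdef, hwdef]
      field_simp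
      ring
    conv_rhs => rw [mul_assoc, he]
  rw [integral_congr_ae (Filter.Eventually.of_forall key)]
  rw [MeasureTheory.integral_const_mul]
  have hshift : ∫ s : ℝ, Real.exp (-(K / D) * (s - m) ^ 2)
      = ∫ s : ℝ, Real.exp (-(K / D) * s ^ 2) :=
    integral_sub_right_eq_self (fun s => Real.exp (-(K / D) * s ^ 2)) m
  rw [hshift, integral_gaussian]
  have hsq : Real.sqrt (π / (K / D)) = Real.sqrt π * Real.sqrt D / Real.sqrt K := by
    rw [div_div_eq_mul_div, Real.sqrt_div (by positivity), Real.sqrt_mul hpi.le]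
  rw [hsq]
  have h1 : Real.sqrt π ≠ 0 := by positivity
  have h2 : Real.sqrt D ≠ 0 := by positivity
  have h3 : Real.sqrt K ≠ 0 := by positivity
  have hππ : Real.sqrt π * Real.sqrt π = π := Real.mul_self_sqrt hpi.le
  field_simp
  linear_combination hππ
end

section
/- For ε, ε' > 0, the quantity c(ε,ε') := (1/π)·∫_ℝ |√ε'·e^{−ε'²t²} − √ε·e^{−ε²t²}| dt is finite and tends to 0 as ε' → ε. Moreover, for operators Π(ε) = (1/π)∫_ℝ e^{−ε²t²−2iqt} U_t dt with U_t unitary, ‖√ε·Π(ε) − √ε'·Π(ε')‖_op ≤ c(ε,ε'). -/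
open MeasureTheory Real Complex Filter

lemma aux_int_f {e : ℝ} (he : 0 < e) :
    Integrable (fun t : ℝ => Real.sqrt e * Real.exp (-e ^ 2 * t ^ 2)) := by
  have h : Integrable (fun t : ℝ => Real.exp (-(e ^ 2) * t ^ 2)) :=
    integrable_exp_neg_mul_sq (by positivity)
  simpa [neg_mul] using h.const_mul (Real.sqrt e)

lemma aux_split (e t q2 : ℝ) : Complex.exp (-(e:ℂ)^2*(t:ℂ)^2 - 2*Complex.I*(q2:ℂ)*(t:ℂ))
    = (Real.exp (-e^2*t^2) : ℂ) * Complex.exp (-(2*Complex.I*(q2:ℂ)*(t:ℂ))) := by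
  rw [Complex.ofReal_exp, ← Complex.exp_add]
  congr 1; push_cast; ring

lemma aux_norm_osc (t q2 : ℝ) : ‖Complex.exp (-(2*Complex.I*(q2:ℂ)*(t:ℂ)))‖ = 1 := by
  rw [Complex.norm_exp]
  norm_num [Complex.mul_re, Complex.mul_im]

lemma aux_norm (e t q2 : ℝ) :
    ‖Complex.exp (-(e:ℂ)^2*(t:ℂ)^2 - 2*Complex.I*(q2:ℂ)*(t:ℂ))‖ = Real.exp (-e^2*t^2) := by
  rw [aux_split, norm_mul, aux_norm_osc, Complex.norm_real, mul_one, Real.norm_eq_abs,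
    abs_of_pos (Real.exp_pos _)]

/-- `c(ε,ε') = (1/π)∫ |√ε' e^{−ε'²t²} − √ε e^{−ε²t²}| dt` is finite and tends to `0`
as `ε' → ε` (within the positive reals); moreover, for
`Π(ε) = (1/π)∫ e^{−ε²t²−2iqt} U_t dt` with `U_t` unitary,
`‖√ε·Π(ε) − √ε'·Π(ε')‖ ≤ c(ε,ε')`. -/
theorem sqrt_weighted_norm_continuity
    {H : Type*} [NormedAddCommGroup H] [InnerProductSpace ℂ H] [CompleteSpace H]
    (U : ℝ → H →L[ℂ] H)
    (hU_iso : ∀ t (x : H), ‖U t x‖ = ‖x‖)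
    (hU_surj : ∀ t, Function.Surjective (U t))
    (hU_meas : AEStronglyMeasurable U (volume : Measure ℝ))
    (q : ℝ)
    (P : ℝ → H →L[ℂ] H)
    (hP : ∀ e : ℝ, P e = (1 / (π : ℂ)) • ∫ t : ℝ,
      Complex.exp (-(e : ℂ) ^ 2 * (t : ℂ) ^ 2 - 2 * Complex.I * (q : ℂ) * (t : ℂ)) • U t)
    (c : ℝ → ℝ → ℝ)
    (hc : ∀ ε ε' : ℝ, c ε ε' = (1 / π) *
      ∫ t : ℝ, |Real.sqrt ε' * Real.exp (-ε' ^ 2 * t ^ 2)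
        - Real.sqrt ε * Real.exp (-ε ^ 2 * t ^ 2)|)
    (ε : ℝ) (hε : 0 < ε) :
    (∀ ε' : ℝ, 0 < ε' → Integrable (fun t : ℝ =>
      |Real.sqrt ε' * Real.exp (-ε' ^ 2 * t ^ 2)
        - Real.sqrt ε * Real.exp (-ε ^ 2 * t ^ 2)|)) ∧
    Tendsto (fun ε' : ℝ => c ε ε') (nhdsWithin ε (Set.Ioi (0 : ℝ))) (nhds 0) ∧
    (∀ ε' : ℝ, 0 < ε' →
      ‖(Real.sqrt ε : ℂ) • P ε - (Real.sqrt ε' : ℂ) • P ε'‖ ≤ c ε ε') := by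
  -- Part 1
  have h1 : ∀ ε' : ℝ, 0 < ε' → Integrable (fun t : ℝ =>
      |Real.sqrt ε' * Real.exp (-ε' ^ 2 * t ^ 2)
        - Real.sqrt ε * Real.exp (-ε ^ 2 * t ^ 2)|) :=
    fun ε' hε' => ((aux_int_f hε').sub (aux_int_f hε)).abs
  refine ⟨h1, ?_, ?_⟩
  -- Part 2
  · have key : Tendsto (fun ε' : ℝ => ∫ t : ℝ,
        |Real.sqrt ε' * Real.exp (-ε' ^ 2 * t ^ 2)
          - Real.sqrt ε * Real.exp (-ε ^ 2 * t ^ 2)|)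
        (nhdsWithin ε (Set.Ioi (0 : ℝ))) (nhds 0) := by
      have hmem : ∀ᶠ ε' in nhdsWithin ε (Set.Ioi (0 : ℝ)), ε' ∈ Set.Ioo (ε/2) (2*ε) := by
        apply Filter.Eventually.filter_mono nhdsWithin_le_nhds
        exact Ioo_mem_nhds (by linarith) (by linarith)
      have key' : Tendsto (fun ε' : ℝ => ∫ t : ℝ,
          |Real.sqrt ε' * Real.exp (-ε' ^ 2 * t ^ 2)
            - Real.sqrt ε * Real.exp (-ε ^ 2 * t ^ 2)|)
          (nhdsWithin ε (Set.Ioi (0 : ℝ)))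
          (nhds (∫ t : ℝ, |Real.sqrt ε * Real.exp (-ε ^ 2 * t ^ 2)
            - Real.sqrt ε * Real.exp (-ε ^ 2 * t ^ 2)|)) := by
        apply tendsto_integral_filter_of_dominated_convergence
          (fun t => Real.sqrt (2*ε) * Real.exp (-(ε/2) ^ 2 * t ^ 2)
            + Real.sqrt ε * Real.exp (-ε ^ 2 * t ^ 2))
        · filter_upwards with ε'
          apply Continuous.aestronglyMeasurable
          exact ((continuous_const.mul (by fun_prop)).sub
            (continuous_const.mul (by fun_prop))).abs
        · filter_upwards [hmem] with ε' hε'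
          filter_upwards with t
          rw [Real.norm_eq_abs, _root_.abs_abs]
          have hb : Real.sqrt ε' * Real.exp (-ε' ^ 2 * t ^ 2)
              ≤ Real.sqrt (2*ε) * Real.exp (-(ε/2) ^ 2 * t ^ 2) := by
            have h2 : Real.sqrt ε' ≤ Real.sqrt (2*ε) := Real.sqrt_le_sqrt hε'.2.le
            have h3 : Real.exp (-ε' ^ 2 * t ^ 2) ≤ Real.exp (-(ε/2) ^ 2 * t ^ 2) := by
              apply Real.exp_le_exp.mpr
              nlinarith [sq_nonneg t, hε, hε'.1, hε'.2,
                mul_nonneg (mul_nonneg (by linarith [hε'.1, hε] : (0:ℝ) ≤ ε' - ε/2)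
                  (by linarith [hε'.1, hε] : (0:ℝ) ≤ ε' + ε/2)) (sq_nonneg t)]
            exact mul_le_mul h2 h3 (Real.exp_pos _).le (Real.sqrt_nonneg _)
          have hnn : 0 ≤ Real.sqrt ε * Real.exp (-ε ^ 2 * t ^ 2) := by positivity
          have hnn' : 0 ≤ Real.sqrt ε' * Real.exp (-ε' ^ 2 * t ^ 2) := by positivity
          calc |Real.sqrt ε' * Real.exp (-ε' ^ 2 * t ^ 2)
                - Real.sqrt ε * Real.exp (-ε ^ 2 * t ^ 2)|
              ≤ |Real.sqrt ε' * Real.exp (-ε' ^ 2 * t ^ 2)|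
                + |Real.sqrt ε * Real.exp (-ε ^ 2 * t ^ 2)| := abs_sub _ _
            _ ≤ _ := by
                rw [_root_.abs_of_nonneg hnn, _root_.abs_of_nonneg hnn']
                exact add_le_add hb le_rfl
        · have h2e : Integrable (fun t : ℝ => Real.exp (-((ε/2) ^ 2) * t ^ 2)) :=
            integrable_exp_neg_mul_sq (by positivity)
          exact ((h2e.const_mul (Real.sqrt (2*ε))).add (aux_int_f hε))
        · filter_upwards with t
          have hcont : Continuous (fun e : ℝ =>
              |Real.sqrt e * Real.exp (-e ^ 2 * t ^ 2)
                - Real.sqrt ε * Real.exp (-ε ^ 2 * t ^ 2)|) := by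
            apply Continuous.abs
            exact ((Real.continuous_sqrt.mul (by fun_prop)).sub continuous_const)
          exact (hcont.tendsto ε).mono_left nhdsWithin_le_nhds
      simpa using key'
    have := key.const_mul (1/π)
    simp only [mul_zero] at this
    refine Tendsto.congr (fun ε' => (hc ε ε').symm) this
  -- Part 3
  · intro ε' hε'
    have hUnorm : ∀ t, ‖U t‖ ≤ 1 := fun t =>
      (U t).opNorm_le_bound zero_le_one (fun x => by rw [hU_iso]; simp)
    set g : ℝ → ℝ → (H →L[ℂ] H) := fun e t =>
      Complex.exp (-(e : ℂ) ^ 2 * (t : ℂ) ^ 2 - 2 * Complex.I * (q : ℂ) * (t : ℂ)) • U t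
      with hg
    have hGmeas : ∀ e : ℝ, AEStronglyMeasurable (g e) volume := by
      intro e
      refine AEStronglyMeasurable.smul (f := fun t : ℝ =>
        Complex.exp (-(e : ℂ) ^ 2 * (t : ℂ) ^ 2 - 2 * Complex.I * (q : ℂ) * (t : ℂ))) ?_ hU_meas
      apply Continuous.aestronglyMeasurable
      fun_prop
    have hGint : ∀ e : ℝ, 0 < e → Integrable (g e) := by
      intro e he
      apply (integrable_exp_neg_mul_sq (show (0:ℝ) < e^2 by positivity)).mono' (hGmeas e)
      filter_upwards with t
      rw [hg]
      simp only
      rw [norm_smul, aux_norm]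
      calc Real.exp (-e ^ 2 * t ^ 2) * ‖U t‖ ≤ Real.exp (-e ^ 2 * t ^ 2) * 1 :=
            mul_le_mul_of_nonneg_left (hUnorm t) (Real.exp_pos _).le
        _ = Real.exp (-(e ^ 2) * t ^ 2) := by rw [mul_one]
    have hrw : ∀ (e : ℝ), (Real.sqrt e : ℂ) • P e
        = (1 / (π : ℂ)) • ∫ t : ℝ, (Real.sqrt e : ℂ) • g e t := by
      intro e
      rw [hP e, integral_smul, smul_comm]
    have hint1 : Integrable (fun t : ℝ => (Real.sqrt ε : ℂ) • g ε t) :=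
      (hGint ε hε).smul ((Real.sqrt ε : ℂ))
    have hint2 : Integrable (fun t : ℝ => (Real.sqrt ε' : ℂ) • g ε' t) :=
      (hGint ε' hε').smul ((Real.sqrt ε' : ℂ))
    rw [hrw ε, hrw ε', ← smul_sub, ← integral_sub hint1 hint2, norm_smul]
    have hπ : ‖(1 / (π : ℂ))‖ = 1 / π := by
      simp [norm_div, Complex.norm_real, Real.norm_eq_abs, abs_of_pos Real.pi_pos]
    rw [hπ, hc]
    apply mul_le_mul_of_nonneg_left _ (by positivity)
    calc ‖∫ t : ℝ, ((Real.sqrt ε : ℂ) • g ε t - (Real.sqrt ε' : ℂ) • g ε' t)‖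
        ≤ ∫ t : ℝ, ‖(Real.sqrt ε : ℂ) • g ε t - (Real.sqrt ε' : ℂ) • g ε' t‖ :=
          norm_integral_le_integral_norm _
      _ ≤ ∫ t : ℝ, |Real.sqrt ε' * Real.exp (-ε' ^ 2 * t ^ 2)
            - Real.sqrt ε * Real.exp (-ε ^ 2 * t ^ 2)| := by
          apply integral_mono (hint1.sub hint2).norm (h1 ε' hε')
          intro t
          simp only [Pi.sub_apply]
          rw [smul_smul, smul_smul, ← sub_smul, aux_split ε t q, aux_split ε' t q]
          rw [norm_smul]
          have hcoef : (Real.sqrt ε : ℂ) * ((Real.exp (-ε^2*t^2) : ℂ)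
                * Complex.exp (-(2*Complex.I*(q:ℂ)*(t:ℂ))))
              - (Real.sqrt ε' : ℂ) * ((Real.exp (-ε'^2*t^2) : ℂ)
                * Complex.exp (-(2*Complex.I*(q:ℂ)*(t:ℂ))))
              = ((Real.sqrt ε * Real.exp (-ε^2*t^2)
                  - Real.sqrt ε' * Real.exp (-ε'^2*t^2) : ℝ) : ℂ)
                * Complex.exp (-(2*Complex.I*(q:ℂ)*(t:ℂ))) := by
            push_cast; ring
          rw [hcoef, norm_mul, aux_norm_osc, mul_one, Complex.norm_real, Real.norm_eq_abs]
          rw [abs_sub_comm]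
          calc |Real.sqrt ε' * Real.exp (-ε' ^ 2 * t ^ 2)
                - Real.sqrt ε * Real.exp (-ε ^ 2 * t ^ 2)| * ‖U t‖
              ≤ |Real.sqrt ε' * Real.exp (-ε' ^ 2 * t ^ 2)
                - Real.sqrt ε * Real.exp (-ε ^ 2 * t ^ 2)| * 1 :=
                mul_le_mul_of_nonneg_left (hUnorm t) (abs_nonneg _)
            _ = _ := mul_one _
end
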